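/- Fix positive integers m_1,…,m_N and let Γ_N(m) be two vertices A, B joined by N internally disjoint paths of lengths m_1,…,m_N. In the degree class group Δ_N(m) of Γ_N(m), let t_k be the class of e_{R¹_k} − e_A, where R¹_k is the first internal vertex of the k-th path (or B if m_k = 1). Let M_k = lcm of {m_1,…,m_N} \ {m_k}. Then the order of t_k in Δ_N(m) equals (Σ_{i=1}^{N} Π_{j≠i} m_j) · M_k / (Π_{j≠k} m_j). -/

import Mathlib

/-- A multigraph: a set of edges, each with an unordered pair of endpoints. -/
structure Multigraph (V E : Type) where
  ends : E → Sym2 V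

namespace Multigraph

variable {V E : Type}

/-- Adjacency via an edge lying in the subset `S`. -/
def Adj (G : Multigraph V E) (S : Set E) (x y : V) : Prop :=
  x ≠ y ∧ ∃ e ∈ S, G.ends e = s(x, y)

/-- The subgraph with edge set `S` is connected (and spans `V`). -/
def ConnectedOn (G : Multigraph V E) (S : Set E) : Prop :=
  ∀ x y : V, Relation.ReflTransGen (G.Adj S) x y

def Connected (G : Multigraph V E) : Prop := G.ConnectedOn Set.univ

/-- No edge is a loop. -/
def Loopless (G : Multigraph V E) : Prop := ∀ e : E, ¬ (G.ends e).IsDiag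

/-- A spanning tree: a minimally connecting spanning set of edges. -/
def IsSpanningTree (G : Multigraph V E) (S : Finset E) : Prop :=
  G.ConnectedOn (S : Set E) ∧ ∀ e ∈ S, ¬ G.ConnectedOn ((S : Set E) \ {e})

/-- The complexity: the number of spanning trees. -/
noncomputable def complexity (G : Multigraph V E) : ℕ :=
  {S : Finset E | G.IsSpanningTree S}.ncard

/-- Number of edges joining `x` and `y`. -/
noncomputable def edgeCount (G : Multigraph V E) (x y : V) : ℕ :=
  {e : E | G.ends e = s(x, y)}.ncard

/-- The Laplacian-type intersection matrix. -/
noncomputable def lap (G : Multigraph V E) [Fintype V] [DecidableEq V] (i j : V) : ℤ :=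
  if i = j then -(∑ u ∈ Finset.univ.erase i, (G.edgeCount i u : ℤ))
  else (G.edgeCount i j : ℤ)

/-- The lattice of multidegrees of twisters: span of the columns of the Laplacian. -/
noncomputable def lapLattice (G : Multigraph V E) [Fintype V] [DecidableEq V] :
    AddSubgroup (V → ℤ) :=
  AddSubgroup.closure (Set.range fun j => fun i => G.lap i j)

/-- The subgroup of `ℤ^V` of vectors with zero coordinate sum. -/
def zeroSum (V : Type) [Fintype V] : AddSubgroup (V → ℤ) where
  carrier := {z | ∑ v, z v = 0}
  add_mem' := by
    intro a b ha hb
    simp only [Set.mem_setOf_eq] at *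
    simp [Finset.sum_add_distrib, ha, hb]
  zero_mem' := by simp
  neg_mem' := by
    intro a ha
    simp only [Set.mem_setOf_eq] at *
    simp [ha]

/-- The degree class group of a multigraph. -/
noncomputable def DCG (G : Multigraph V E) [Fintype V] [DecidableEq V] : Type :=
  zeroSum V ⧸ (G.lapLattice.addSubgroupOf (zeroSum V))

noncomputable instance (G : Multigraph V E) [Fintype V] [DecidableEq V] :
    AddCommGroup (G.DCG) :=
  QuotientAddGroup.Quotient.addCommGroup _

/-- The class in the DCG of an element of the zero-sum lattice. -/
noncomputable def DCGclass (G : Multigraph V E) [Fintype V] [DecidableEq V]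
    (z : zeroSum V) : G.DCG :=
  QuotientAddGroup.mk z

/-- The element `e_x - e_y` of the zero-sum lattice. -/
def eDiff (V : Type) [Fintype V] [DecidableEq V] (x y : V) : zeroSum V :=
  ⟨fun v => (if v = x then 1 else 0) - (if v = y then 1 else 0), by
    show ∑ v : V, ((if v = x then (1:ℤ) else 0) - (if v = y then 1 else 0)) = 0
    simp [Finset.sum_sub_distrib]⟩

end Multigraph

namespace Multigraph

/-- The `j`-th vertex along the `i`-th path of the generalized theta graph:
`Sum.inl 0 = A` for `j = 0`, the internal vertices for `1 ≤ j ≤ m i - 1`,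
and `Sum.inl 1 = B` for `j ≥ m i`. -/
def thetaVert (N : ℕ) (m : Fin N → ℕ) (i : Fin N) (j : ℕ) :
    Fin 2 ⊕ Σ i : Fin N, Fin (m i - 1) :=
  if _h0 : j = 0 then Sum.inl 0
  else if h : j ≤ m i - 1 then Sum.inr ⟨i, ⟨j - 1, by omega⟩⟩
  else Sum.inl 1

/-- The generalized theta graph `Γ_N(m)`: two vertices `A = Sum.inl 0` and
`B = Sum.inl 1` joined by `N` internally disjoint paths, the `i`-th of length `m i`. -/
def theta (N : ℕ) (m : Fin N → ℕ) :
    Multigraph (Fin 2 ⊕ Σ i : Fin N, Fin (m i - 1)) (Σ i : Fin N, Fin (m i)) :=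
  ⟨fun e => s(thetaVert N m e.1 e.2.1, thetaVert N m e.1 (e.2.1 + 1))⟩

end Multigraph
namespace ThetaOrder
open Multigraph

lemma mem_lapLattice_iff {V E : Type} [Fintype V] [DecidableEq V] (G : Multigraph V E)
    (x : V → ℤ) :
    x ∈ G.lapLattice ↔ ∃ z : V → ℤ, ∀ v, x v = ∑ j, z j * G.lap v j := by
  have h : G.lapLattice = (Submodule.span ℤ (Set.range fun j => fun i => G.lap i j)).toAddSubgroup := by
    rw [Submodule.span_int_eq_addSubgroupClosure]; rfl
  rw [h]
  change x ∈ Submodule.span ℤ _ ↔ _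
  rw [Submodule.mem_span_range_iff_exists_fun]
  constructor
  · rintro ⟨c, hc⟩
    exact ⟨c, fun v => by rw [← hc]; simp [Finset.sum_apply, mul_comm]⟩
  · rintro ⟨c, hc⟩
    exact ⟨c, by funext v; rw [hc v]; simp [Finset.sum_apply, mul_comm]⟩

/-- The contribution of one edge to the Laplacian pairing at `v`. -/
noncomputable def econ {V : Type} [DecidableEq V] (z : V → ℤ) (v : V) : Sym2 V → ℤ :=
  Sym2.lift ⟨fun a b => (if v = a then z b - z v else 0) + (if v = b then z a - z v else 0),
    fun a b => by dsimp only; ring⟩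

lemma econ_mk {V : Type} [DecidableEq V] (z : V → ℤ) (v a b : V) :
    econ z v s(a, b) =
      (if v = a then z b - z v else 0) + (if v = b then z a - z v else 0) := rfl

lemma edgeCount_eq_sum {V E : Type} [Fintype E] [DecidableEq V] (G : Multigraph V E) (x y : V) :
    (G.edgeCount x y : ℤ) = ∑ e : E, if G.ends e = s(x, y) then 1 else 0 := by
  classical
  rw [edgeCount, Set.ncard_eq_toFinset_card', Set.toFinset_setOf, Finset.sum_boole]

lemma lap_pairing {V E : Type} [Fintype V] [Fintype E] [DecidableEq V] (G : Multigraph V E)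
    (z : V → ℤ) (v : V) :
    ∑ j, z j * G.lap v j = ∑ e : E, econ z v (G.ends e) := by
  classical
  have h1 : ∑ j, z j * G.lap v j = ∑ j ∈ Finset.univ.erase v, (G.edgeCount v j : ℤ) * (z j - z v) := by
    rw [← Finset.add_sum_erase _ (fun j => z j * G.lap v j) (Finset.mem_univ v)]
    have e1 : G.lap v v = -(∑ u ∈ Finset.univ.erase v, (G.edgeCount v u : ℤ)) := if_pos rfl
    have e2 : ∀ j ∈ Finset.univ.erase v, z j * G.lap v j = (G.edgeCount v j : ℤ) * z j := by
      intro j hj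
      rw [lap, if_neg (Ne.symm (Finset.ne_of_mem_erase hj))]; ring
    rw [Finset.sum_congr rfl e2, e1]
    simp only [mul_sub, Finset.sum_sub_distrib, mul_neg, Finset.mul_sum]
    simp only [mul_comm (z v)]
    ring
  rw [h1]
  have key : ∀ s : Sym2 V,
      ∑ j ∈ Finset.univ.erase v, (if s(v, j) = s then (1:ℤ) else 0) * (z j - z v) = econ z v s := by
    intro s
    induction s using Sym2.ind with
    | _ a b =>
      rw [econ_mk]
      by_cases hva : v = a <;> by_cases hvb : v = b
      · subst hva; subst hvb
        rw [Finset.sum_eq_zero]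
        · simp
        · intro j hj
          rw [if_neg, zero_mul]
          simp [Sym2.eq_iff, Ne.symm (Finset.ne_of_mem_erase hj), Finset.ne_of_mem_erase hj]
      · subst hva
        rw [Finset.sum_eq_single_of_mem b
            (Finset.mem_erase.2 ⟨fun h => hvb h.symm, Finset.mem_univ b⟩)]
        · rw [if_pos rfl, one_mul]
          simp [hvb]
        · intro j hj hne
          rw [if_neg, zero_mul]
          simp [Sym2.eq_iff, hne, fun h : v = b => hvb h]
      · subst hvb
        rw [Finset.sum_eq_single_of_mem a
            (Finset.mem_erase.2 ⟨fun h => hva h.symm, Finset.mem_univ a⟩)]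
        · rw [if_pos (Sym2.eq_swap), one_mul]
          simp [hva]
        · intro j hj hne
          rw [if_neg, zero_mul]
          simp [Sym2.eq_iff, hne, fun h : v = a => hva h]
      · rw [Finset.sum_eq_zero]
        · simp [hva, hvb]
        · intro j hj
          rw [if_neg, zero_mul]
          simp [Sym2.eq_iff, hva, hvb]
  rw [Finset.sum_congr rfl (fun e _ => (key (G.ends e)).symm)]
  rw [Finset.sum_comm]
  refine Finset.sum_congr rfl (fun j hj => ?_)
  rw [← Finset.sum_mul]
  congr 1
  rw [edgeCount_eq_sum]
  exact Finset.sum_congr rfl (fun e _ => if_congr eq_comm rfl rfl)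

end ThetaOrder
namespace ThetaOrder
open Multigraph

variable (N : ℕ) (m : Fin N → ℕ)

lemma vert_zero (i : Fin N) : thetaVert N m i 0 = Sum.inl 0 := by simp [thetaVert]

lemma vert_eq_A_iff (i : Fin N) (j : ℕ) : thetaVert N m i j = Sum.inl 0 ↔ j = 0 := by
  unfold thetaVert
  split
  · simp_all
  · split <;> simp_all

lemma vert_eq_B_iff (hm : ∀ i, 1 ≤ m i) (i : Fin N) (j : ℕ) :
    thetaVert N m i j = Sum.inl 1 ↔ m i ≤ j := by
  have h1 := hm i
  unfold thetaVert
  split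
  · subst ‹j = 0›
    constructor
    · intro h
      exfalso
      exact absurd (Sum.inl.injEq _ _ ▸ h) (by decide)
    · omega
  · split
    · constructor
      · intro h; exact absurd h (by simp)
      · omega
    · exact iff_of_true rfl (by omega)
  
lemma vert_eq_inr_iff (hm : ∀ i, 1 ≤ m i) (i : Fin N) (j : ℕ) (i' : Fin N) (r : Fin (m i' - 1)) :
    thetaVert N m i j = Sum.inr ⟨i', r⟩ ↔ i = i' ∧ j = r.val + 1 := by
  have hr := r.isLt
  unfold thetaVert
  split
  · simp only [iff_false_intro (show ¬ (i = i' ∧ j = r.val + 1) by omega)]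
    simp
  · split
    · constructor
      · intro h
        rw [Sum.inr.injEq] at h
        obtain ⟨h1, h2⟩ := Sigma.mk.inj_iff.mp h
        subst h1
        rw [heq_eq_eq, Fin.ext_iff] at h2
        simp only at h2
        omega
      · rintro ⟨h1, h2⟩
        subst h1; subst h2
        simp
    · constructor
      · intro h; simp at h
      · rintro ⟨h1, h2⟩
        subst h1
        omega

end ThetaOrder
namespace ThetaOrder
open Multigraph

variable (N : ℕ) (m : Fin N → ℕ)

lemma theta_ends (e : Σ i : Fin N, Fin (m i)) :
    (theta N m).ends e = s(thetaVert N m e.1 e.2.1, thetaVert N m e.1 (e.2.1 + 1)) := rfl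

lemma lap_theta_A (hm : ∀ i, 1 ≤ m i) (z : (Fin 2 ⊕ Σ i : Fin N, Fin (m i - 1)) → ℤ) :
    ∑ j, z j * (theta N m).lap (Sum.inl 0) j
      = ∑ i : Fin N, (z (thetaVert N m i 1) - z (Sum.inl 0)) := by
  rw [lap_pairing]
  rw [← Finset.univ_sigma_univ, Finset.sum_sigma]
  refine Finset.sum_congr rfl fun i _ => ?_
  rw [Finset.sum_eq_single_of_mem (⟨0, hm i⟩ : Fin (m i)) (Finset.mem_univ _)]
  · rw [theta_ends, econ_mk]
    rw [if_pos (by rw [vert_zero]), if_neg (by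
      intro h; rw [eq_comm, vert_eq_A_iff] at h; omega), add_zero]
  · intro j _ hne
    rw [theta_ends, econ_mk]
    rw [if_neg (by intro h; rw [eq_comm, vert_eq_A_iff] at h
                   exact hne (Fin.ext h)),
        if_neg (by intro h; rw [eq_comm, vert_eq_A_iff] at h; omega), add_zero]

lemma lap_theta_B (hm : ∀ i, 1 ≤ m i) (z : (Fin 2 ⊕ Σ i : Fin N, Fin (m i - 1)) → ℤ) :
    ∑ j, z j * (theta N m).lap (Sum.inl 1) j
      = ∑ i : Fin N, (z (thetaVert N m i (m i - 1)) - z (Sum.inl 1)) := by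
  rw [lap_pairing]
  rw [← Finset.univ_sigma_univ, Finset.sum_sigma]
  refine Finset.sum_congr rfl fun i _ => ?_
  rw [Finset.sum_eq_single_of_mem (⟨m i - 1, by have := hm i; omega⟩ : Fin (m i)) (Finset.mem_univ _)]
  · rw [theta_ends, econ_mk]
    rw [if_neg (by intro h; rw [eq_comm, vert_eq_B_iff N m hm] at h
                   have h' : m i ≤ m i - 1 := h
                   have := hm i; omega),
        if_pos (by rw [eq_comm, vert_eq_B_iff N m hm]
                   show m i ≤ m i - 1 + 1
                   have := hm i; omega), zero_add]
  · intro j _ hne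
    rw [theta_ends, econ_mk]
    rw [if_neg (by intro h; rw [eq_comm, vert_eq_B_iff N m hm] at h
                   have h' : m i ≤ j.val := h
                   have := j.isLt; omega),
        if_neg (by intro h; rw [eq_comm, vert_eq_B_iff N m hm] at h
                   have h' : m i ≤ j.val + 1 := h
                   have := j.isLt
                   exact hne (Fin.ext (show j.val = m i - 1 by omega))), add_zero]

lemma lap_theta_R (hm : ∀ i, 1 ≤ m i) (z : (Fin 2 ⊕ Σ i : Fin N, Fin (m i - 1)) → ℤ)
    (i₀ : Fin N) (r : Fin (m i₀ - 1)) :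
    ∑ j, z j * (theta N m).lap (Sum.inr ⟨i₀, r⟩) j
      = z (thetaVert N m i₀ r.val) + z (thetaVert N m i₀ (r.val + 2))
        - 2 * z (Sum.inr ⟨i₀, r⟩) := by
  have hr := r.isLt
  rw [lap_pairing]
  have split : ∀ e : Σ i : Fin N, Fin (m i),
      econ z (Sum.inr ⟨i₀, r⟩) ((theta N m).ends e) =
        (if (Sum.inr ⟨i₀, r⟩ : Fin 2 ⊕ Σ i : Fin N, Fin (m i - 1)) = thetaVert N m e.1 e.2.1
          then z (thetaVert N m e.1 (e.2.1 + 1)) - z (Sum.inr ⟨i₀, r⟩) else 0)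
        + (if (Sum.inr ⟨i₀, r⟩ : Fin 2 ⊕ Σ i : Fin N, Fin (m i - 1)) = thetaVert N m e.1 (e.2.1 + 1)
          then z (thetaVert N m e.1 e.2.1) - z (Sum.inr ⟨i₀, r⟩) else 0) :=
    fun e => by rw [theta_ends, econ_mk]
  rw [Finset.sum_congr rfl fun e _ => split e, Finset.sum_add_distrib]
  have h1 : ∑ e : Σ i : Fin N, Fin (m i),
      (if (Sum.inr ⟨i₀, r⟩ : Fin 2 ⊕ Σ i : Fin N, Fin (m i - 1)) = thetaVert N m e.1 e.2.1
          then z (thetaVert N m e.1 (e.2.1 + 1)) - z (Sum.inr ⟨i₀, r⟩) else 0)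
      = z (thetaVert N m i₀ (r.val + 2)) - z (Sum.inr ⟨i₀, r⟩) := by
    rw [Finset.sum_eq_single_of_mem (⟨i₀, ⟨r.val + 1, by omega⟩⟩ : Σ i : Fin N, Fin (m i))
        (Finset.mem_univ _)]
    · rw [if_pos (by rw [eq_comm, vert_eq_inr_iff N m hm]; exact ⟨rfl, rfl⟩)]
    · rintro ⟨i, j⟩ _ hne
      rw [if_neg (by
        intro h
        rw [eq_comm, vert_eq_inr_iff N m hm] at h
        obtain ⟨h1, h2⟩ := h
        subst h1
        exact hne (congrArg (Sigma.mk i) (Fin.ext (by simpa using h2))))]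
  have h2 : ∑ e : Σ i : Fin N, Fin (m i),
      (if (Sum.inr ⟨i₀, r⟩ : Fin 2 ⊕ Σ i : Fin N, Fin (m i - 1)) = thetaVert N m e.1 (e.2.1 + 1)
          then z (thetaVert N m e.1 e.2.1) - z (Sum.inr ⟨i₀, r⟩) else 0)
      = z (thetaVert N m i₀ r.val) - z (Sum.inr ⟨i₀, r⟩) := by
    rw [Finset.sum_eq_single_of_mem (⟨i₀, ⟨r.val, by omega⟩⟩ : Σ i : Fin N, Fin (m i))
        (Finset.mem_univ _)]
    · rw [if_pos (by rw [eq_comm, vert_eq_inr_iff N m hm]; exact ⟨rfl, rfl⟩)]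
    · rintro ⟨i, j⟩ _ hne
      rw [if_neg (by
        intro h
        rw [eq_comm, vert_eq_inr_iff N m hm] at h
        obtain ⟨h1, h2⟩ := h
        subst h1
        exact hne (congrArg (Sigma.mk i) (Fin.ext (by simpa using h2))))]
  rw [h1, h2]
  ring

end ThetaOrder
namespace ThetaOrder
open Multigraph

section Arith
variable (N : ℕ) (m : Fin N → ℕ) (k : Fin N)

/-- `Mk`: lcm of the `m i` for `i ≠ k`. -/
def Mk : ℕ := (Finset.univ.erase k).lcm m

/-- `cc i = Mk / m i`. -/
def cc (i : Fin N) : ℕ := Mk N m k / m i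

/-- The order `d`. -/
def dd : ℕ := m k * (∑ i ∈ Finset.univ.erase k, cc N m k i) + Mk N m k

variable (hm : ∀ i, 1 ≤ m i)
include hm

lemma cc_mul (i : Fin N) (hi : i ∈ Finset.univ.erase k) : m i * cc N m k i = Mk N m k :=
  Nat.mul_div_cancel' (Finset.dvd_lcm hi) 

lemma Mk_pos : 0 < Mk N m k := by
  rw [Nat.pos_iff_ne_zero]
  intro h
  rw [Mk, Finset.lcm_eq_zero_iff] at h
  obtain ⟨i, hi, h0⟩ := Set.mem_image _ _ _ |>.mp h
  have := hm i
  omega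

lemma dd_pos : 0 < dd N m k := by
  have := Mk_pos N m k hm
  rw [dd]; omega

lemma key_identity :
    (∑ i : Fin N, ∏ j ∈ Finset.univ.erase i, m j) * Mk N m k
      = dd N m k * ∏ j ∈ Finset.univ.erase k, m j := by
  have hterm : ∀ i ∈ Finset.univ.erase k,
      (∏ j ∈ Finset.univ.erase i, m j) * Mk N m k
        = m k * cc N m k i * ∏ j ∈ Finset.univ.erase k, m j := by
    intro i hi
    have h1 : (∏ j ∈ Finset.univ.erase i, m j) * m i = ∏ j, m j :=
      Finset.prod_erase_mul _ _ (Finset.mem_univ i)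
    have h2 : (∏ j ∈ Finset.univ.erase k, m j) * m k = ∏ j, m j :=
      Finset.prod_erase_mul _ _ (Finset.mem_univ k)
    have h3 := cc_mul N m k hm i hi
    apply Nat.eq_of_mul_eq_mul_left (show 0 < m i from hm i)
    calc m i * ((∏ j ∈ Finset.univ.erase i, m j) * Mk N m k)
        = Mk N m k * ((∏ j ∈ Finset.univ.erase i, m j) * m i) := by ring
      _ = (m i * cc N m k i) * (m k * ∏ j ∈ Finset.univ.erase k, m j) := by
          rw [h3, h1, mul_comm (m k), ← h2]
      _ = m i * (m k * cc N m k i * ∏ j ∈ Finset.univ.erase k, m j) := by ring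
  calc (∑ i : Fin N, ∏ j ∈ Finset.univ.erase i, m j) * Mk N m k
      = ∑ i : Fin N, (∏ j ∈ Finset.univ.erase i, m j) * Mk N m k := Finset.sum_mul _ _ _
    _ = (∏ j ∈ Finset.univ.erase k, m j) * Mk N m k
        + ∑ i ∈ Finset.univ.erase k, (∏ j ∈ Finset.univ.erase i, m j) * Mk N m k :=
        (Finset.add_sum_erase _ _ (Finset.mem_univ k)).symm
    _ = (∏ j ∈ Finset.univ.erase k, m j) * Mk N m k
        + ∑ i ∈ Finset.univ.erase k, m k * cc N m k i * ∏ j ∈ Finset.univ.erase k, m j := by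
        rw [Finset.sum_congr rfl hterm]
    _ = dd N m k * ∏ j ∈ Finset.univ.erase k, m j := by
        rw [dd, add_mul, Finset.mul_sum, Finset.sum_mul]; ring

lemma dd_val :
    (∑ i : Fin N, ∏ j ∈ Finset.univ.erase i, m j) * Mk N m k /
        ∏ j ∈ Finset.univ.erase k, m j  = dd N m k := by
  rw [key_identity N m k hm, Nat.mul_div_cancel]
  exact Finset.prod_pos fun i _ => hm i

end Arith
end ThetaOrder
namespace ThetaOrder
open Multigraph

variable (N : ℕ) (m : Fin N → ℕ)

lemma vert_inr (hm : ∀ i, 1 ≤ m i) (i : Fin N) (j : ℕ) (hj : j < m i - 1) :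
    thetaVert N m i (j + 1) = Sum.inr ⟨i, ⟨j, hj⟩⟩ :=
  (vert_eq_inr_iff N m hm i (j + 1) i ⟨j, hj⟩).mpr ⟨rfl, rfl⟩

lemma vert_m_eq_B (hm : ∀ i, 1 ≤ m i) (i : Fin N) :
    thetaVert N m i (m i) = Sum.inl 1 :=
  (vert_eq_B_iff N m hm i (m i)).mpr le_rfl

variable (k : Fin N)

lemma A_ne_vert (hm : ∀ i, 1 ≤ m i) :
    ¬ ((Sum.inl 0 : Fin 2 ⊕ Σ i : Fin N, Fin (m i - 1)) = thetaVert N m k 1) := by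
  intro h
  rw [eq_comm, vert_eq_A_iff] at h
  omega

lemma inr_eq_vert_iff (hm : ∀ i, 1 ≤ m i) (i : Fin N) (r : Fin (m i - 1)) :
    ((Sum.inr ⟨i, r⟩ : Fin 2 ⊕ Σ i : Fin N, Fin (m i - 1)) = thetaVert N m k 1)
      ↔ i = k ∧ r.val = 0 := by
  rw [eq_comm, vert_eq_inr_iff N m hm k 1 i r]
  constructor
  · rintro ⟨h1, h2⟩; exact ⟨h1.symm, by omega⟩
  · rintro ⟨h1, h2⟩; exact ⟨h1.symm, by omega⟩

lemma B_eq_vert_iff (hm : ∀ i, 1 ≤ m i) :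
    ((Sum.inl 1 : Fin 2 ⊕ Σ i : Fin N, Fin (m i - 1)) = thetaVert N m k 1) ↔ m k = 1 := by
  rw [eq_comm, vert_eq_B_iff N m hm k 1]
  have := hm k
  omega

/-- The target vector: `e_{R¹ₖ} - e_A`. -/
def tvec (v : Fin 2 ⊕ Σ i : Fin N, Fin (m i - 1)) : ℤ :=
  (if v = thetaVert N m k 1 then 1 else 0) - (if v = Sum.inl 0 then 1 else 0)

lemma tvec_inr (hm : ∀ i, 1 ≤ m i) (i : Fin N) (r : Fin (m i - 1)) :
    tvec N m k (Sum.inr ⟨i, r⟩) = if i = k ∧ r.val = 0 then 1 else 0 := by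
  rw [tvec]
  rw [show (if (Sum.inr ⟨i, r⟩ : Fin 2 ⊕ Σ i : Fin N, Fin (m i - 1)) = Sum.inl 0
      then (1:ℤ) else 0) = 0 from if_neg (by simp), sub_zero]
  by_cases hc : i = k ∧ r.val = 0
  · rw [if_pos ((inr_eq_vert_iff N m k hm i r).mpr hc), if_pos hc]
  · rw [if_neg (fun hh => hc ((inr_eq_vert_iff N m k hm i r).mp hh)), if_neg hc]


lemma forward (hm : ∀ i, 1 ≤ m i) (n : ℤ) (z : (Fin 2 ⊕ Σ i : Fin N, Fin (m i - 1)) → ℤ)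
    (hz : ∀ v, n * tvec N m k v = ∑ j, z j * (theta N m).lap v j) :
    (dd N m k : ℤ) ∣ n := by
  -- equation at A
  have hzA : -n = ∑ i : Fin N, (z (thetaVert N m i 1) - z (Sum.inl 0)) := by
    have h := hz (Sum.inl 0)
    rw [lap_theta_A N m hm z] at h
    rw [tvec, if_neg (A_ne_vert N m k hm), if_pos rfl] at h
    linarith [h]
  -- equations at internal vertices
  have hzR : ∀ (i : Fin N) (j : ℕ) (hj : j < m i - 1),
      z (thetaVert N m i j) + z (thetaVert N m i (j + 2))
        - 2 * z (thetaVert N m i (j + 1))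
      = n * (if i = k ∧ j = 0 then 1 else 0) := by
    intro i j hj
    have h := hz (Sum.inr ⟨i, ⟨j, hj⟩⟩)
    rw [lap_theta_R N m hm z i ⟨j, hj⟩, tvec_inr N m k hm i ⟨j, hj⟩,
      ← vert_inr N m hm i j hj] at h
    exact h.symm
  set σ : Fin N → ℤ := fun i => z (thetaVert N m i 1) - z (Sum.inl 0) with hσ
  -- constant differences on paths i ≠ k
  have h_diff : ∀ i, i ≠ k → ∀ j, j + 1 ≤ m i →
      z (thetaVert N m i (j + 1)) - z (thetaVert N m i j) = σ i := by
    intro i hik j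
    induction j with
    | zero => intro _; rw [vert_zero]
    | succ j ih =>
      intro hj
      have hr := hzR i j (by omega)
      rw [if_neg (by rintro ⟨h, -⟩; exact hik h), mul_zero] at hr
      have ihv := ih (by omega)
      linarith [hr, ihv]
  have h_tel : ∀ i, i ≠ k → ∀ j, j ≤ m i →
      z (thetaVert N m i j) = z (Sum.inl 0) + j * σ i := by
    intro i hik j
    induction j with
    | zero => intro _; rw [vert_zero]; push_cast; ring
    | succ j ih =>
      intro hj
      have h1 := h_diff i hik j hj
      have h2 := ih (by omega)
      push_cast
      push_cast at h2
      linarith [h1, h2]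
  have hD : ∀ i ∈ Finset.univ.erase k,
      (m i : ℤ) * σ i = z (Sum.inl 1) - z (Sum.inl 0) := by
    intro i hi
    have h := h_tel i (Finset.ne_of_mem_erase hi) (m i) le_rfl
    rw [vert_m_eq_B N m hm i] at h
    linarith [h]
  -- path k
  have hBk : z (Sum.inl 1) - z (Sum.inl 0)
      = (m k : ℤ) * σ k + ((m k : ℤ) - 1) * n := by
    by_cases hmk : m k = 1
    · have hvk : thetaVert N m k 1 = Sum.inl 1 :=
        (vert_eq_B_iff N m hm k 1).mpr (by omega)
      have hσk1 : σ k = z (thetaVert N m k 1) - z (Sum.inl 0) := rfl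
      rw [hvk] at hσk1
      rw [hmk]
      push_cast
      linarith [hσk1]
    · have hmk2 : 2 ≤ m k := by have := hm k; omega
      have h_diff_k : ∀ j, 1 ≤ j → j + 1 ≤ m k →
          z (thetaVert N m k (j + 1)) - z (thetaVert N m k j) = σ k + n := by
        intro j hj1 hj2
        induction j with
        | zero => omega
        | succ j ih =>
          by_cases hj0 : j = 0
          · subst hj0
            have hr := hzR k 0 (by omega)
            rw [if_pos ⟨rfl, rfl⟩, mul_one, vert_zero] at hr
            have hσk1 : σ k = z (thetaVert N m k 1) - z (Sum.inl 0) := rfl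
            linarith [hr, hσk1]
          · have h1 : 1 ≤ j := by omega
            have hr := hzR k j (by omega)
            rw [if_neg (by rintro ⟨-, h⟩; omega), mul_zero] at hr
            have ihv := ih (by omega) (by omega)
            linarith [hr, ihv]
      have h_tel_k : ∀ j, j + 1 ≤ m k →
          z (thetaVert N m k (j + 1)) = z (Sum.inl 0) + σ k + j * (σ k + n) := by
        intro j
        induction j with
        | zero =>
          intro _
          have hσk1 : σ k = z (thetaVert N m k 1) - z (Sum.inl 0) := rfl
          push_cast
          linarith [hσk1]
        | succ j ih =>
          intro hj
          have h1 := h_diff_k (j + 1) (by omega) hj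
          have h2 := ih (by omega)
          push_cast
          push_cast at h2
          linarith [h1, h2]
      have h := h_tel_k (m k - 1) (by omega)
      rw [show m k - 1 + 1 = m k by omega, vert_m_eq_B N m hm k] at h
      have hc : ((m k - 1 : ℕ) : ℤ) = (m k : ℤ) - 1 := by
        have h1 := hm k
        push_cast [Nat.cast_sub h1]
        ring
      rw [hc] at h
      linarith [h]
  -- lcm divisibility
  have hMk_dvd : ((Mk N m k : ℕ) : ℤ) ∣ (z (Sum.inl 1) - z (Sum.inl 0)) := by
    rw [← Int.dvd_natAbs, Int.natCast_dvd_natCast]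
    refine Finset.lcm_dvd fun i hi => ?_
    have h1 : (m i : ℤ) ∣ (z (Sum.inl 1) - z (Sum.inl 0)) := ⟨σ i, (hD i hi).symm⟩
    rwa [Int.natCast_dvd] at h1
  obtain ⟨w, hw⟩ := hMk_dvd
  have hσ' : ∀ i ∈ Finset.univ.erase k, σ i = (cc N m k i : ℤ) * w := by
    intro i hi
    have h1 := hD i hi
    have h2 : (m i : ℤ) * ((cc N m k i : ℤ) * w) = z (Sum.inl 1) - z (Sum.inl 0) := by
      rw [hw, ← mul_assoc]
      norm_cast
      rw [cc_mul N m k hm i hi]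
    have hne : (m i : ℤ) ≠ 0 := by have := hm i; positivity
    exact mul_left_cancel₀ hne (h1.trans h2.symm)
  have hσk : σ k = -n - (∑ i ∈ Finset.univ.erase k, (cc N m k i : ℤ)) * w := by
    have hsplit : ∑ i, σ i = σ k + ∑ i ∈ Finset.univ.erase k, σ i :=
      (Finset.add_sum_erase _ σ (Finset.mem_univ k)).symm
    have h2 : ∑ i ∈ Finset.univ.erase k, σ i
        = (∑ i ∈ Finset.univ.erase k, (cc N m k i : ℤ)) * w := by
      rw [Finset.sum_mul]
      exact Finset.sum_congr rfl hσ'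
    have h3 : ∑ i, σ i = -n := hzA.symm
    linarith [hsplit, h2, h3]
  have hdd : (dd N m k : ℤ)
      = (m k : ℤ) * (∑ i ∈ Finset.univ.erase k, (cc N m k i : ℤ)) + (Mk N m k : ℤ) := by
    rw [dd]
    push_cast
    ring
  refine ⟨-w, ?_⟩
  rw [hdd]
  linear_combination hBk - hw + (m k : ℤ) * hσk

end ThetaOrder
namespace ThetaOrder
open Multigraph

variable (N : ℕ) (m : Fin N → ℕ) (k : Fin N)

/-- Slope on the distinguished path. -/
noncomputable def sigk (q : ℤ) : ℤ :=
  q * (∑ i ∈ Finset.univ.erase k, (cc N m k i : ℤ)) - (dd N m k : ℤ) * q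

/-- The potential witnessing `d ∣ n ⇒ n·t ∈ Λ`. -/
noncomputable def zf (q : ℤ) : (Fin 2 ⊕ Σ i : Fin N, Fin (m i - 1)) → ℤ := fun v =>
  match v with
  | Sum.inl a => if a = 0 then 0 else -q * (Mk N m k : ℤ)
  | Sum.inr ⟨i, r⟩ =>
      if i = k then sigk N m k q + (r.val : ℤ) * (sigk N m k q + (dd N m k : ℤ) * q)
      else ((r.val : ℤ) + 1) * (-q * (cc N m k i : ℤ))

lemma zf_inl0 (q : ℤ) : zf N m k q (Sum.inl 0) = 0 := rfl

lemma zf_inl1 (q : ℤ) : zf N m k q (Sum.inl 1) = -q * (Mk N m k : ℤ) := rfl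

lemma zf_inr_k (q : ℤ) (r : Fin (m k - 1)) :
    zf N m k q (Sum.inr ⟨k, r⟩)
      = sigk N m k q + (r.val : ℤ) * (sigk N m k q + (dd N m k : ℤ) * q) := by
  simp [zf]

lemma zf_inr_ne (q : ℤ) (i : Fin N) (hik : i ≠ k) (r : Fin (m i - 1)) :
    zf N m k q (Sum.inr ⟨i, r⟩) = ((r.val : ℤ) + 1) * (-q * (cc N m k i : ℤ)) := by
  simp [zf, hik]

lemma backward (hm : ∀ i, 1 ≤ m i) (q : ℤ) (v : Fin 2 ⊕ Σ i : Fin N, Fin (m i - 1)) :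
    ((dd N m k : ℤ) * q) * tvec N m k v = ∑ j, zf N m k q j * (theta N m).lap v j := by
  have hdd : (dd N m k : ℤ)
      = (m k : ℤ) * (∑ i ∈ Finset.univ.erase k, (cc N m k i : ℤ)) + (Mk N m k : ℤ) := by
    rw [dd]; push_cast; ring
  have hsig : sigk N m k q
      = q * (∑ i ∈ Finset.univ.erase k, (cc N m k i : ℤ)) - (dd N m k : ℤ) * q := rfl
  have hmc : ∀ i, i ≠ k → (m i : ℤ) * (cc N m k i : ℤ) = (Mk N m k : ℤ) := by
    intro i hik
    exact_mod_cast congrArg (Nat.cast : ℕ → ℤ)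
      (cc_mul N m k hm i (Finset.mem_erase.mpr ⟨hik, Finset.mem_univ i⟩))
  have val_off : ∀ i, i ≠ k → ∀ j, j ≤ m i →
      zf N m k q (thetaVert N m i j) = (j : ℤ) * (-q * (cc N m k i : ℤ)) := by
    intro i hik j hj
    by_cases h0 : j = 0
    · subst h0; rw [vert_zero, zf_inl0]; push_cast; ring
    · by_cases h1 : j ≤ m i - 1
      · obtain ⟨j', rfl⟩ : ∃ j', j = j' + 1 := ⟨j - 1, by omega⟩
        have hlt : j' < m i - 1 := by omega
        rw [vert_inr N m hm i j' hlt, zf_inr_ne N m k q i hik ⟨j', hlt⟩]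
        have hc : (((⟨j', hlt⟩ : Fin (m i - 1)).val : ℤ)) + 1 = ((j' + 1 : ℕ) : ℤ) := by
          push_cast; rfl
        rw [hc]
      · have hj' : j = m i := by omega
        subst hj'
        rw [vert_m_eq_B N m hm i, zf_inl1]
        linear_combination q * hmc i hik
  have hBkval : -q * (Mk N m k : ℤ)
      = sigk N m k q + ((m k : ℤ) - 1) * (sigk N m k q + (dd N m k : ℤ) * q) := by
    rw [hsig]; linear_combination q * hdd
  have val_k : ∀ j, 1 ≤ j → j ≤ m k →
      zf N m k q (thetaVert N m k j)
        = sigk N m k q + ((j - 1 : ℕ) : ℤ) * (sigk N m k q + (dd N m k : ℤ) * q) := by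
    intro j h1 h2
    by_cases hb : j ≤ m k - 1
    · obtain ⟨j', rfl⟩ : ∃ j', j = j' + 1 := ⟨j - 1, by omega⟩
      have hlt : j' < m k - 1 := by omega
      rw [vert_inr N m hm k j' hlt, zf_inr_k]
      have hc : (((⟨j', hlt⟩ : Fin (m k - 1)).val : ℤ)) = ((j' + 1 - 1 : ℕ) : ℤ) := by
        push_cast [Nat.add_sub_cancel]; rfl
      rw [hc]
    · have hj' : j = m k := by omega
      subst hj'
      rw [vert_m_eq_B N m hm k, zf_inl1, hBkval]
      have hc : ((m k - 1 : ℕ) : ℤ) = (m k : ℤ) - 1 := by omega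
      rw [hc]
  rcases v with a | ⟨i, r⟩
  · fin_cases a
    · -- vertex A
      show ((dd N m k : ℤ) * q) * tvec N m k (Sum.inl 0)
        = ∑ j, zf N m k q j * (theta N m).lap (Sum.inl 0) j
      rw [lap_theta_A N m hm _]
      rw [tvec, if_neg (A_ne_vert N m k hm), if_pos rfl]
      rw [← Finset.add_sum_erase _ _ (Finset.mem_univ k)]
      have hk1 : zf N m k q (thetaVert N m k 1) - zf N m k q (Sum.inl 0) = sigk N m k q := by
        rw [val_k 1 le_rfl (hm k), zf_inl0]
        norm_num
      have hterm : ∀ i ∈ Finset.univ.erase k,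
          zf N m k q (thetaVert N m i 1) - zf N m k q (Sum.inl 0)
            = -q * (cc N m k i : ℤ) := by
        intro i hi
        rw [val_off i (Finset.ne_of_mem_erase hi) 1 (hm i), zf_inl0]
        push_cast; ring
      rw [Finset.sum_congr rfl hterm, hk1]
      rw [show ∑ i ∈ Finset.univ.erase k, -q * (cc N m k i : ℤ)
          = -q * ∑ i ∈ Finset.univ.erase k, (cc N m k i : ℤ) from (Finset.mul_sum _ _ _).symm]
      rw [hsig]; ring
    · -- vertex B
      show ((dd N m k : ℤ) * q) * tvec N m k (Sum.inl 1)
        = ∑ j, zf N m k q j * (theta N m).lap (Sum.inl 1) j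
      rw [lap_theta_B N m hm _]
      rw [tvec, show (if (Sum.inl 1 : Fin 2 ⊕ Σ i : Fin N, Fin (m i - 1)) = Sum.inl 0
          then (1:ℤ) else 0) = 0 from if_neg (by simp), sub_zero]
      rw [← Finset.add_sum_erase _ _ (Finset.mem_univ k)]
      have hterm : ∀ i ∈ Finset.univ.erase k,
          zf N m k q (thetaVert N m i (m i - 1)) - zf N m k q (Sum.inl 1)
            = q * (cc N m k i : ℤ) := by
        intro i hi
        have hik := Finset.ne_of_mem_erase hi
        rw [val_off i hik (m i - 1) (by omega), zf_inl1]
        have hc : ((m i - 1 : ℕ) : ℤ) = (m i : ℤ) - 1 := by have := hm i; omega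
        rw [hc]
        linear_combination (-q) * hmc i hik
      rw [Finset.sum_congr rfl hterm]
      rw [show ∑ i ∈ Finset.univ.erase k, q * (cc N m k i : ℤ)
          = q * ∑ i ∈ Finset.univ.erase k, (cc N m k i : ℤ) from (Finset.mul_sum _ _ _).symm]
      by_cases hmk : m k = 1
      · rw [if_pos ((B_eq_vert_iff N m k hm).mpr hmk)]
        rw [show m k - 1 = 0 from by omega, vert_zero, zf_inl0, zf_inl1]
        have hmk' : (m k : ℤ) = 1 := by exact_mod_cast congrArg (Nat.cast : ℕ → ℤ) hmk
        linear_combination q * hdd + q * (∑ i ∈ Finset.univ.erase k, (cc N m k i : ℤ)) * hmk'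
      · rw [if_neg (fun h => hmk ((B_eq_vert_iff N m k hm).mp h))]
        rw [val_k (m k - 1) (by have := hm k; omega) (by omega), zf_inl1]
        have hc : ((m k - 1 - 1 : ℕ) : ℤ) = (m k : ℤ) - 2 := by have := hm k; omega
        rw [hc, hsig]
        linear_combination q * hdd
  · -- internal vertices
    rw [lap_theta_R N m hm _ i r, tvec_inr N m k hm i r]
    by_cases hik : i = k
    · subst hik
      have hmk2 : 2 ≤ m i := by have := r.isLt; have := hm i; omega
      rw [zf_inr_k]
      by_cases hr0 : r.val = 0
      · rw [if_pos ⟨rfl, hr0⟩, mul_one, hr0, vert_zero, zf_inl0,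
          val_k 2 (by omega) (by omega)]
        push_cast
        ring
      · rw [if_neg (by rintro ⟨-, h⟩; exact hr0 h), mul_zero]
        rw [val_k r.val (by omega) (by have := r.isLt; omega),
          val_k (r.val + 2) (by omega) (by have := r.isLt; omega)]
        have hc1 : ((r.val - 1 : ℕ) : ℤ) = (r.val : ℤ) - 1 := by omega
        have hc2 : ((r.val + 2 - 1 : ℕ) : ℤ) = (r.val : ℤ) + 1 := by omega
        rw [hc1, hc2]
        ring
    · rw [if_neg (by rintro ⟨h, -⟩; exact hik h), mul_zero]
      have hr2 : r.val + 2 ≤ m i := by have := r.isLt; omega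
      rw [val_off i hik r.val (by omega), val_off i hik (r.val + 2) (by omega),
        zf_inr_ne N m k q i hik r]
      push_cast
      ring

end ThetaOrder
open Multigraph in
/-- In the degree class group of `Γ_N(m)`, the order of the class `t k` of
`e_{R¹_k} - e_A` is `(∑_i ∏_{j ≠ i} m j) * lcm{m j : j ≠ k} / ∏_{j ≠ k} m j`. -/
theorem order_tk_theta (N : ℕ) (m : Fin N → ℕ) (hm : ∀ i, 1 ≤ m i) (k : Fin N) :
    addOrderOf
        ((theta N m).DCGclass (Multigraph.eDiff _ (thetaVert N m k 1) (Sum.inl 0))) =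
      (∑ i : Fin N, ∏ j ∈ Finset.univ.erase i, m j) * (Finset.univ.erase k).lcm m /
        ∏ j ∈ Finset.univ.erase k, m j := by
  rw [show (Finset.univ.erase k).lcm m = ThetaOrder.Mk N m k from rfl]
  rw [ThetaOrder.dd_val N m k hm]
  set t : Multigraph.zeroSum (Fin 2 ⊕ Σ i : Fin N, Fin (m i - 1)) :=
    Multigraph.eDiff _ (thetaVert N m k 1) (Sum.inl 0) with ht
  suffices hiff : ∀ n : ℕ, n • ((theta N m).DCGclass t) = 0 ↔ ThetaOrder.dd N m k ∣ n by
    exact Nat.dvd_antisymm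
      (addOrderOf_dvd_of_nsmul_eq_zero ((hiff _).mpr dvd_rfl))
      ((hiff _).mp (addOrderOf_nsmul_eq_zero _))
  intro n
  have h1 : n • ((theta N m).DCGclass t) = (theta N m).DCGclass (n • t) := by
    rw [DCGclass, DCGclass, QuotientAddGroup.mk_nsmul]
    rfl
  rw [h1]
  refine (QuotientAddGroup.eq_zero_iff (n • t)).trans ?_
  rw [AddSubgroup.mem_addSubgroupOf,
    ThetaOrder.mem_lapLattice_iff]
  have hcoe : ∀ v, ((n • t : Multigraph.zeroSum _) : _ → ℤ) v
      = (n : ℤ) * ThetaOrder.tvec N m k v := by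
    intro v
    rw [AddSubgroup.coe_nsmul]
    rw [Pi.smul_apply]
    rw [show ((t : _ → ℤ) v) = ThetaOrder.tvec N m k v from rfl]
    rw [nsmul_eq_mul]
  constructor
  · rintro ⟨z, hz⟩
    have hf := ThetaOrder.forward N m k hm (n : ℤ) z (fun v => by rw [← hcoe v]; exact hz v)
    exact_mod_cast hf
  · rintro ⟨q, hq⟩
    refine ⟨ThetaOrder.zf N m k (q : ℤ), fun v => ?_⟩
    rw [hcoe v]
    rw [show ((n : ℤ)) = (ThetaOrder.dd N m k : ℤ) * (q : ℤ) by exact_mod_cast congrArg (Nat.cast : ℕ → ℤ) hq]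
    exact ThetaOrder.backward N m k hm (q : ℤ) v
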